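/- arXiv:2504.10256 — 2 statements merged into one kernel-verified Lean document; each statement's English description precedes it below -/
import Mathlib

section
/- Let (X,d) be a compact metric space equipped with a finite Borel measure μ, let p ∈ (1,∞), and let N ≥ 1. Let φ_n, φ : X → X (n ∈ ℕ) be bijections such that φ_n, φ, φ_n⁻¹ and φ⁻¹ are all μ-measure preserving, and assume φ_n → φ uniformly on X. Let u_n, u ∈ L^p(μ; ℝ^N) with sup_n ‖u_n‖_{L^p(μ)} < ∞ and suppose u_n converges weakly to u in L^p(μ; ℝ^N). Then ‖u_n∘φ_n⁻¹‖_{L^p(μ)} = ‖u_n‖_{L^p(μ)} for every n, and for every continuous ψ : X → ℝ^N one has ∫_X (u_n∘φ_n⁻¹)·ψ dμ → ∫_X (u∘φ⁻¹)·ψ dμ; in particular u_n∘φ_n⁻¹ converges weakly to u∘φ⁻¹ in L^p(μ; ℝ^N). -/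
open MeasureTheory Filter Topology
open scoped ENNReal

/-- Weak limits in `L^p` are transported through a uniformly convergent sequence of
measure-preserving bijections: the composed functions have the same `L^p` norms, their
integrals against continuous test functions converge, and they converge weakly. -/
theorem stmt0
    {X : Type*} [MetricSpace X] [CompactSpace X]
    [MeasurableSpace X] [BorelSpace X]
    (μ : Measure X) [IsFiniteMeasure μ]
    (p : ℝ) (hp : 1 < p)
    (N : ℕ) (hN : 1 ≤ N)
    (φn φninv : ℕ → X → X) (φ φinv : X → X)
    (hbijn : ∀ n, Function.LeftInverse (φninv n) (φn n) ∧
      Function.RightInverse (φninv n) (φn n))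
    (hbij : Function.LeftInverse φinv φ ∧ Function.RightInverse φinv φ)
    (hmpn : ∀ n, MeasurePreserving (φn n) μ μ)
    (hmpninv : ∀ n, MeasurePreserving (φninv n) μ μ)
    (hmp : MeasurePreserving φ μ μ) (hmpinv : MeasurePreserving φinv μ μ)
    (hunif : TendstoUniformly (fun n => φn n) φ atTop)
    (un : ℕ → X → EuclideanSpace ℝ (Fin N)) (u : X → EuclideanSpace ℝ (Fin N))
    (hun : ∀ n, MemLp (un n) (ENNReal.ofReal p) μ)
    (hu : MemLp u (ENNReal.ofReal p) μ)
    (C : ℝ≥0∞) (hC : C ≠ ⊤)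
    (hbound : ∀ n, eLpNorm (un n) (ENNReal.ofReal p) μ ≤ C)
    (hweak : ∀ g : X → ℝ, MemLp g (ENNReal.ofReal (p / (p - 1))) μ →
      Tendsto (fun n => ∫ x, g x • un n x ∂μ) atTop (𝓝 (∫ x, g x • u x ∂μ))) :
    (∀ n, eLpNorm (fun x => un n (φninv n x)) (ENNReal.ofReal p) μ
        = eLpNorm (un n) (ENNReal.ofReal p) μ)
    ∧ (∀ ψ : X → EuclideanSpace ℝ (Fin N), Continuous ψ →
        Tendsto (fun n => ∫ x, (inner ℝ (un n (φninv n x)) (ψ x) : ℝ) ∂μ)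
          atTop (𝓝 (∫ x, (inner ℝ (u (φinv x)) (ψ x) : ℝ) ∂μ)))
    ∧ (∀ g : X → ℝ, MemLp g (ENNReal.ofReal (p / (p - 1))) μ →
        Tendsto (fun n => ∫ x, g x • un n (φninv n x) ∂μ) atTop
          (𝓝 (∫ x, g x • u (φinv x) ∂μ))) := by
  obtain ⟨hbl, hbr⟩ := hbij
  have hpq : p.HolderConjugate (p / (p - 1)) := Real.HolderConjugate.conjExponent hp
  set q := ENNReal.ofReal p with hqdef
  set q' := ENNReal.ofReal (p / (p - 1)) with hq'def
  have hq_ne_top : q ≠ ⊤ := ENNReal.ofReal_ne_top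
  have hq'_ne_top : q' ≠ ⊤ := ENNReal.ofReal_ne_top
  have hq_ne_zero : q ≠ 0 := by
    simp only [hqdef, ne_eq, ENNReal.ofReal_eq_zero, not_le]; linarith
  have hq'_ne_zero : q' ≠ 0 := by
    simp only [hq'def, ne_eq, ENNReal.ofReal_eq_zero, not_le]; exact hpq.symm.pos
  have hqtr : q.toReal = p := ENNReal.toReal_ofReal (by linarith)
  have hq'tr : q'.toReal = p / (p - 1) := ENNReal.toReal_ofReal hpq.symm.pos.le
  have hone_le_q : (1 : ℝ≥0∞) ≤ q := by
    rw [hqdef, ← ENNReal.ofReal_one]; exact ENNReal.ofReal_le_ofReal hp.le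
  have hconj : 1 / q + 1 / q' = 1 := by
    simpa only [one_div] using hpq.inv_add_inv_ennreal
  have hconj' : (1 : ℝ≥0∞) / 1 = 1 / q' + 1 / q := by
    rw [add_comm, hconj, one_div_one]
  -- measurable equivalences
  have hmeasn : ∀ n, Measurable (φn n) := fun n => (hmpn n).measurable
  have hmeasninv : ∀ n, Measurable (φninv n) := fun n => (hmpninv n).measurable
  let en : ℕ → X ≃ᵐ X := fun n =>
    { toFun := φninv n
      invFun := φn n
      left_inv := (hbijn n).2
      right_inv := (hbijn n).1
      measurable_toFun := hmeasninv n
      measurable_invFun := hmeasn n }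
  let e : X ≃ᵐ X :=
    { toFun := φinv
      invFun := φ
      left_inv := hbr
      right_inv := hbl
      measurable_toFun := hmpinv.measurable
      measurable_invFun := hmp.measurable }
  -- part 1
  have part1 : ∀ n, eLpNorm (fun x => un n (φninv n x)) q μ = eLpNorm (un n) q μ :=
    fun n => eLpNorm_comp_measurePreserving (hun n).1 (hmpninv n)
  have hvmem : ∀ n, MemLp (fun x => un n (φninv n x)) q μ :=
    fun n => (hun n).comp_measurePreserving (hmpninv n)
  have humem : MemLp (fun x => u (φinv x)) q μ := hu.comp_measurePreserving hmpinv
  have hueq : eLpNorm (fun x => u (φinv x)) q μ = eLpNorm u q μ :=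
    eLpNorm_comp_measurePreserving hu.1 hmpinv
  -- L¹ facts
  have hmemL1 : ∀ n, MemLp (un n) 1 μ := fun n => (hun n).mono_exponent hone_le_q
  have hint1 : ∀ n, Integrable (un n) μ := fun n => memLp_one_iff_integrable.mp (hmemL1 n)
  -- uniform L¹ bound
  set Me : ℝ≥0∞ := C * (μ Set.univ) ^ (1 - 1 / p) with hMedef
  have hMe_ne_top : Me ≠ ⊤ :=
    ENNReal.mul_ne_top hC
      (ENNReal.rpow_ne_top_of_nonneg (by rw [sub_nonneg]; rw [div_le_one (by linarith)]; linarith)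
        (measure_ne_top μ _))
  set M := Me.toReal with hMdef
  have hM0 : 0 ≤ M := ENNReal.toReal_nonneg
  have hL1bound : ∀ n, ∫ x, ‖un n x‖ ∂μ ≤ M := by
    intro n
    have h1 := eLpNorm_le_eLpNorm_mul_rpow_measure_univ hone_le_q (hun n).1
    have hexp : 1 / (1 : ℝ≥0∞).toReal - 1 / q.toReal = 1 - 1 / p := by
      simp [hqtr]
    rw [hexp] at h1
    have h2 : eLpNorm (un n) 1 μ ≤ Me := by
      refine h1.trans ?_
      rw [hMedef]
      exact mul_le_mul_left (hbound n) _
    have h3 : ∫ x, ‖un n x‖ ∂μ = (eLpNorm (un n) 1 μ).toReal := by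
      rw [eLpNorm_one_eq_lintegral_enorm, integral_norm_eq_lintegral_enorm (hun n).1]
    rw [h3]
    exact ENNReal.toReal_mono hMe_ne_top h2
  -- generic integrability of products
  have hintE : ∀ (f : X → ℝ) (w : X → EuclideanSpace ℝ (Fin N)), MemLp f q' μ → MemLp w q μ →
      Integrable (fun x => f x • w x) μ := by
    intro f w hf hw
    exact memLp_one_iff_integrable.mp (MemLp.smul hw hf (hpqr := ⟨by simpa only [one_div] using hconj'.symm⟩))
  have hintR : ∀ (f v : X → ℝ), MemLp f q' μ → MemLp v q μ →
      Integrable (fun x => f x * v x) μ := by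
    intro f v hf hv
    exact memLp_one_iff_integrable.mp (MemLp.smul hv hf (hpqr := ⟨by simpa only [one_div] using hconj'.symm⟩))
  -- Hölder bound
  have holder : ∀ (f : X → ℝ) (v : X → EuclideanSpace ℝ (Fin N)), MemLp f q' μ → MemLp v q μ →
      ‖∫ x, f x • v x ∂μ‖ ≤ (eLpNorm f q' μ).toReal * (eLpNorm v q μ).toReal := by
    intro f v hf hv
    have h0 : (0:ℝ) ≤ (∫ x, ‖f x‖ ^ (p / (p-1)) ∂μ) ^ (p/(p-1))⁻¹ :=
      Real.rpow_nonneg (integral_nonneg fun x => Real.rpow_nonneg (norm_nonneg _) _) _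
    have h0' : (0:ℝ) ≤ (∫ x, ‖v x‖ ^ p ∂μ) ^ p⁻¹ :=
      Real.rpow_nonneg (integral_nonneg fun x => Real.rpow_nonneg (norm_nonneg _) _) _
    calc ‖∫ x, f x • v x ∂μ‖ ≤ ∫ x, ‖f x • v x‖ ∂μ := norm_integral_le_integral_norm _
      _ = ∫ x, ‖f x‖ * ‖v x‖ ∂μ := by simp only [norm_smul]
      _ ≤ (∫ x, ‖f x‖ ^ (p/(p-1)) ∂μ) ^ (1/(p/(p-1))) * (∫ x, ‖v x‖ ^ p ∂μ) ^ (1/p) := by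
          have h := integral_mul_norm_le_Lp_mul_Lq (f := f) (g := fun x => ‖v x‖) hpq.symm
            (hq'def ▸ hf) (hqdef ▸ hv.norm)
          simpa [Real.norm_eq_abs, abs_norm] using h
      _ = (eLpNorm f q' μ).toReal * (eLpNorm v q μ).toReal := by
          rw [hf.eLpNorm_eq_integral_rpow_norm hq'_ne_zero hq'_ne_top,
            hv.eLpNorm_eq_integral_rpow_norm hq_ne_zero hq_ne_top, hqtr, hq'tr,
            ENNReal.toReal_ofReal h0, ENNReal.toReal_ofReal h0', one_div, one_div]
  -- key weak convergence against L^{q'} vector test functions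
  have key : ∀ h : X → EuclideanSpace ℝ (Fin N), MemLp h q' μ →
      Tendsto (fun n => ∫ x, (inner ℝ (un n x) (h x) : ℝ) ∂μ) atTop
        (𝓝 (∫ x, (inner ℝ (u x) (h x) : ℝ) ∂μ)) := by
    intro h hh
    have hcoord : ∀ i : Fin N, MemLp (fun x => h x i) q' μ := fun i =>
      (EuclideanSpace.proj i : EuclideanSpace ℝ (Fin N) →L[ℝ] ℝ).comp_memLp' hh
    have hucoord : ∀ (v : X → EuclideanSpace ℝ (Fin N)), MemLp v q μ → ∀ i : Fin N,
        MemLp (fun x => v x i) q μ := fun v hv i =>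
      (EuclideanSpace.proj i : EuclideanSpace ℝ (Fin N) →L[ℝ] ℝ).comp_memLp' hv
    have hinner_eq : ∀ (v : X → EuclideanSpace ℝ (Fin N)) (x : X),
        (inner ℝ (v x) (h x) : ℝ) = ∑ i : Fin N, h x i * v x i := by
      intro v x
      rw [PiLp.inner_apply]
      exact Finset.sum_congr rfl fun i _ => by
        simp [RCLike.inner_apply, mul_comm]
    have hiexp : ∀ (v : X → EuclideanSpace ℝ (Fin N)), MemLp v q μ →
        ∫ x, (inner ℝ (v x) (h x) : ℝ) ∂μ = ∑ i : Fin N, ∫ x, h x i * v x i ∂μ := by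
      intro v hv
      rw [← integral_finset_sum]
      · exact integral_congr_ae (ae_of_all _ fun x => hinner_eq v x)
      · exact fun i _ => hintR _ _ (hcoord i) (hucoord v hv i)
    have hcoordtend : ∀ i : Fin N,
        Tendsto (fun n => ∫ x, h x i * un n x i ∂μ) atTop (𝓝 (∫ x, h x i * u x i ∂μ)) := by
      intro i
      have h1 := hweak (fun x => h x i) (hcoord i)
      have h2 := ((EuclideanSpace.proj i : EuclideanSpace ℝ (Fin N) →L[ℝ] ℝ).continuous.tendsto
        _).comp h1
      have e1 : ∀ (v : X → EuclideanSpace ℝ (Fin N)), MemLp v q μ →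
          (EuclideanSpace.proj i : EuclideanSpace ℝ (Fin N) →L[ℝ] ℝ) (∫ x, h x i • v x ∂μ)
            = ∫ x, h x i * v x i ∂μ := by
        intro v hv
        rw [← ContinuousLinearMap.integral_comp_comm _ (hintE _ _ (hcoord i) hv)]
        refine integral_congr_ae (ae_of_all _ fun x => ?_)
        simp [smul_eq_mul]
      have e2 : ∀ n, (EuclideanSpace.proj i : EuclideanSpace ℝ (Fin N) →L[ℝ] ℝ)
          (∫ x, h x i • un n x ∂μ) = ∫ x, h x i * un n x i ∂μ := fun n => e1 _ (hun n)
      simp only [Function.comp_def, e2, e1 u hu] at h2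
      exact h2
    have := tendsto_finset_sum Finset.univ (fun i _ => hcoordtend i)
    simp only [hiexp u hu]
    refine this.congr fun n => ?_
    exact (hiexp (un n) (hun n)).symm
  -- change of variables
  have hCoVn : ∀ n (F : X → ℝ), ∫ x, F (φninv n x) ∂μ = ∫ y, F y ∂μ := fun n F =>
    (hmpninv n).integral_comp (en n).measurableEmbedding F
  have hCoVinv : ∀ F : X → ℝ, ∫ x, F (φinv x) ∂μ = ∫ y, F y ∂μ := fun F =>
    hmpinv.integral_comp e.measurableEmbedding F
  -- integrability of inner products against bounded measurable functions
  have hinner_int : ∀ n (w : X → EuclideanSpace ℝ (Fin N)), AEStronglyMeasurable w μ →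
      ∀ K : ℝ, (∀ x, ‖w x‖ ≤ K) → Integrable (fun y => (inner ℝ (un n y) (w y) : ℝ)) μ := by
    intro n w hw K hK
    refine Integrable.mono' ((hint1 n).norm.const_mul K) ((hun n).1.inner hw)
      (ae_of_all _ fun y => ?_)
    calc ‖(inner ℝ (un n y) (w y) : ℝ)‖ ≤ ‖un n y‖ * ‖w y‖ := norm_inner_le_norm _ _
      _ ≤ K * ‖un n y‖ := by
          rw [mul_comm]
          exact mul_le_mul_of_nonneg_right (hK y) (norm_nonneg _)
  -- part 2
  have part2 : ∀ ψ : X → EuclideanSpace ℝ (Fin N), Continuous ψ →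
      Tendsto (fun n => ∫ x, (inner ℝ (un n (φninv n x)) (ψ x) : ℝ) ∂μ) atTop
        (𝓝 (∫ x, (inner ℝ (u (φinv x)) (ψ x) : ℝ) ∂μ)) := by
    intro ψ hψ
    set Ψ : BoundedContinuousFunction X (EuclideanSpace ℝ (Fin N)) :=
      BoundedContinuousFunction.mkOfCompact ⟨ψ, hψ⟩ with hΨdef
    have hbdd : ∀ x, ‖ψ x‖ ≤ ‖Ψ‖ := fun x => Ψ.norm_coe_le_norm x
    have hψφ_meas : AEStronglyMeasurable (fun y => ψ (φ y)) μ :=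
      (hψ.measurable.comp hmp.measurable).aestronglyMeasurable
    have hψφn_meas : ∀ n, AEStronglyMeasurable (fun y => ψ (φn n y)) μ := fun n =>
      (hψ.measurable.comp (hmeasn n)).aestronglyMeasurable
    have hψφmem : MemLp (fun y => ψ (φ y)) q' μ :=
      (memLp_top_of_bound hψφ_meas ‖Ψ‖ (ae_of_all _ fun y => hbdd _)).mono_exponent le_top
    -- change of variables for each n
    have hCoV2 : ∀ n, ∫ x, (inner ℝ (un n (φninv n x)) (ψ x) : ℝ) ∂μ
        = ∫ y, (inner ℝ (un n y) (ψ (φn n y)) : ℝ) ∂μ := by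
      intro n
      rw [← hCoVn n (fun y => (inner ℝ (un n y) (ψ (φn n y)) : ℝ))]
      refine integral_congr_ae (ae_of_all _ fun x => ?_)
      simp only [(hbijn n).2 x]
    have hCoVtarget : ∫ x, (inner ℝ (u (φinv x)) (ψ x) : ℝ) ∂μ
        = ∫ y, (inner ℝ (u y) (ψ (φ y)) : ℝ) ∂μ := by
      rw [← hCoVinv (fun y => (inner ℝ (u y) (ψ (φ y)) : ℝ))]
      refine integral_congr_ae (ae_of_all _ fun x => ?_)
      simp only [hbr x]
    -- splitting
    have hsplit : ∀ n, ∫ y, (inner ℝ (un n y) (ψ (φn n y)) : ℝ) ∂μ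
        = (∫ y, (inner ℝ (un n y) (ψ (φn n y) - ψ (φ y)) : ℝ) ∂μ)
          + ∫ y, (inner ℝ (un n y) (ψ (φ y)) : ℝ) ∂μ := by
      intro n
      rw [← integral_add]
      · refine integral_congr_ae (ae_of_all _ fun y => ?_)
        simp only [inner_sub_right]; ring
      · refine hinner_int n _ ((hψφn_meas n).sub hψφ_meas) (2 * ‖Ψ‖) fun y => ?_
        calc ‖ψ (φn n y) - ψ (φ y)‖ ≤ ‖ψ (φn n y)‖ + ‖ψ (φ y)‖ := norm_sub_le _ _
          _ ≤ 2 * ‖Ψ‖ := by have := hbdd (φn n y); have := hbdd (φ y); linarith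
      · exact hinner_int n _ hψφ_meas ‖Ψ‖ fun y => hbdd _
    -- term A tends to zero
    have hA : Tendsto (fun n => ∫ y, (inner ℝ (un n y) (ψ (φn n y) - ψ (φ y)) : ℝ) ∂μ)
        atTop (𝓝 0) := by
      have hψuc : UniformContinuous ψ := CompactSpace.uniformContinuous_of_continuous hψ
      have hunif2 : TendstoUniformly (fun n y => ψ (φn n y)) (fun y => ψ (φ y)) atTop :=
        hψuc.comp_tendstoUniformly hunif
      rw [NormedAddCommGroup.tendsto_nhds_zero]
      intro ε hε
      have hδpos : 0 < ε / (M + 1) := by positivity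
      filter_upwards [Metric.tendstoUniformly_iff.mp hunif2 (ε / (M + 1)) hδpos] with n hn
      have hb : ∀ y, ‖ψ (φn n y) - ψ (φ y)‖ ≤ ε / (M + 1) := fun y => by
        have := hn y
        rw [dist_comm, dist_eq_norm] at this
        exact this.le
      have hstep : ‖∫ y, (inner ℝ (un n y) (ψ (φn n y) - ψ (φ y)) : ℝ) ∂μ‖
          ≤ (ε / (M + 1)) * M := by
        calc ‖∫ y, (inner ℝ (un n y) (ψ (φn n y) - ψ (φ y)) : ℝ) ∂μ‖
            ≤ ∫ y, ‖(inner ℝ (un n y) (ψ (φn n y) - ψ (φ y)) : ℝ)‖ ∂μ :=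
              norm_integral_le_integral_norm _
          _ ≤ ∫ y, (ε / (M + 1)) * ‖un n y‖ ∂μ := by
              refine integral_mono_of_nonneg (ae_of_all _ fun y => norm_nonneg _)
                ((hint1 n).norm.const_mul _) (ae_of_all _ fun y => ?_)
              calc ‖(inner ℝ (un n y) (ψ (φn n y) - ψ (φ y)) : ℝ)‖
                  ≤ ‖un n y‖ * ‖ψ (φn n y) - ψ (φ y)‖ := norm_inner_le_norm _ _
                _ ≤ (ε / (M + 1)) * ‖un n y‖ := by
                    rw [mul_comm]
                    exact mul_le_mul_of_nonneg_right (hb y) (norm_nonneg _)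
          _ = (ε / (M + 1)) * ∫ y, ‖un n y‖ ∂μ := integral_const_mul _ _
          _ ≤ (ε / (M + 1)) * M :=
              mul_le_mul_of_nonneg_left (hL1bound n) hδpos.le
      refine lt_of_le_of_lt hstep ?_
      have h1 : (ε / (M + 1)) * M < (ε / (M + 1)) * (M + 1) := by
        apply mul_lt_mul_of_pos_left (by linarith) hδpos
      have h2 : (ε / (M + 1)) * (M + 1) = ε := div_mul_cancel₀ _ (by linarith)
      linarith
    -- term B
    have hB := key (fun y => ψ (φ y)) hψφmem
    have heq : (fun n => ∫ x, (inner ℝ (un n (φninv n x)) (ψ x) : ℝ) ∂μ)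
        = fun n => (∫ y, (inner ℝ (un n y) (ψ (φn n y) - ψ (φ y)) : ℝ) ∂μ)
          + ∫ y, (inner ℝ (un n y) (ψ (φ y)) : ℝ) ∂μ := by
      funext n; rw [hCoV2 n, hsplit n]
    rw [heq, hCoVtarget]
    simpa using hA.add hB
  -- continuous test case for part 3
  have contcase : ∀ g₀ : X → ℝ, Continuous g₀ →
      Tendsto (fun n => ∫ x, g₀ x • un n (φninv n x) ∂μ) atTop
        (𝓝 (∫ x, g₀ x • u (φinv x) ∂μ)) := by
    intro g₀ hg₀
    set G : BoundedContinuousFunction X ℝ := BoundedContinuousFunction.mkOfCompact ⟨g₀, hg₀⟩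
      with hGdef
    have hbddG : ∀ x, ‖g₀ x‖ ≤ ‖G‖ := fun x => G.norm_coe_le_norm x
    have hg₀mem : MemLp g₀ q' μ :=
      (memLp_top_of_bound hg₀.aestronglyMeasurable ‖G‖
        (ae_of_all _ hbddG)).mono_exponent le_top
    have hintn : ∀ n, Integrable (fun x => g₀ x • un n (φninv n x)) μ :=
      fun n => hintE _ _ hg₀mem (hvmem n)
    have hintu : Integrable (fun x => g₀ x • u (φinv x)) μ := hintE _ _ hg₀mem humem
    have hsingle : ∀ (i : Fin N) (v : EuclideanSpace ℝ (Fin N)) (c : ℝ),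
        (inner ℝ v (c • EuclideanSpace.single i (1:ℝ)) : ℝ) = c * v i := by
      intro i v c
      rw [real_inner_smul_right, EuclideanSpace.inner_single_right]
      simp [mul_comm]
    have hcoordc : ∀ i : Fin N, Tendsto
        (fun n => (EuclideanSpace.proj i : EuclideanSpace ℝ (Fin N) →L[ℝ] ℝ)
          (∫ x, g₀ x • un n (φninv n x) ∂μ)) atTop
        (𝓝 ((EuclideanSpace.proj i : EuclideanSpace ℝ (Fin N) →L[ℝ] ℝ)
          (∫ x, g₀ x • u (φinv x) ∂μ))) := by
      intro i
      have hψc : Continuous (fun x => g₀ x • EuclideanSpace.single i (1:ℝ)) :=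
        hg₀.smul continuous_const
      have h2 := part2 _ hψc
      have eq1 : ∀ n, (EuclideanSpace.proj i : EuclideanSpace ℝ (Fin N) →L[ℝ] ℝ)
          (∫ x, g₀ x • un n (φninv n x) ∂μ)
          = ∫ x, (inner ℝ (un n (φninv n x)) (g₀ x • EuclideanSpace.single i (1:ℝ)) : ℝ) ∂μ := by
        intro n
        rw [← ContinuousLinearMap.integral_comp_comm _ (hintn n)]
        refine integral_congr_ae (ae_of_all _ fun x => ?_)
        simp only [hsingle]
        simp [smul_eq_mul]
      have eq2 : (EuclideanSpace.proj i : EuclideanSpace ℝ (Fin N) →L[ℝ] ℝ)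
          (∫ x, g₀ x • u (φinv x) ∂μ)
          = ∫ x, (inner ℝ (u (φinv x)) (g₀ x • EuclideanSpace.single i (1:ℝ)) : ℝ) ∂μ := by
        rw [← ContinuousLinearMap.integral_comp_comm _ hintu]
        refine integral_congr_ae (ae_of_all _ fun x => ?_)
        simp only [hsingle]
        simp [smul_eq_mul]
      simp only [eq1, eq2]
      exact h2
    rw [(EuclideanSpace.equiv (Fin N) ℝ).toHomeomorph.isInducing.tendsto_nhds_iff]
    rw [tendsto_pi_nhds]
    intro i
    exact hcoordc i
  -- part 3 via density of continuous functions
  have part3 : ∀ g : X → ℝ, MemLp g q' μ →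
      Tendsto (fun n => ∫ x, g x • un n (φninv n x) ∂μ) atTop
        (𝓝 (∫ x, g x • u (φinv x) ∂μ)) := by
    intro g hg
    rw [Metric.tendsto_atTop]
    intro ε hε
    set K : ℝ := C.toReal + (eLpNorm u q μ).toReal + 1 with hKdef
    have hK1 : (0:ℝ) ≤ C.toReal := ENNReal.toReal_nonneg
    have hK2 : (0:ℝ) ≤ (eLpNorm u q μ).toReal := ENNReal.toReal_nonneg
    have hKpos : 0 < K := by rw [hKdef]; linarith
    obtain ⟨g₀, hclose, hg₀mem⟩ := hg.exists_boundedContinuous_eLpNorm_sub_le hq'_ne_top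
      (ε := ENNReal.ofReal (ε / (3 * K)))
      (by simp only [ne_eq, ENNReal.ofReal_eq_zero, not_le]; positivity)
    have hdiff : (eLpNorm (g - ⇑g₀) q' μ).toReal ≤ ε / (3 * K) :=
      ENNReal.toReal_le_of_le_ofReal (by positivity) hclose
    have hgsub : MemLp (g - ⇑g₀) q' μ := hg.sub hg₀mem
    have hb1 : ∀ (w : X → EuclideanSpace ℝ (Fin N)), MemLp w q μ →
        dist (∫ x, g x • w x ∂μ) (∫ x, g₀ x • w x ∂μ)
          ≤ (ε / (3 * K)) * (eLpNorm w q μ).toReal := by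
      intro w hw
      rw [dist_eq_norm, ← integral_sub (hintE _ _ hg hw) (hintE _ _ hg₀mem hw)]
      have hfeq : (fun x => g x • w x - g₀ x • w x) = fun x => (g - ⇑g₀) x • w x := by
        funext x; simp [sub_smul]
      rw [hfeq]
      calc ‖∫ x, (g - ⇑g₀) x • w x ∂μ‖
          ≤ (eLpNorm (g - ⇑g₀) q' μ).toReal * (eLpNorm w q μ).toReal := holder _ _ hgsub hw
        _ ≤ (ε / (3 * K)) * (eLpNorm w q μ).toReal :=
            mul_le_mul_of_nonneg_right hdiff ENNReal.toReal_nonneg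
    obtain ⟨n₀, hn₀⟩ := Metric.tendsto_atTop.mp (contcase g₀ g₀.continuous) (ε / 3)
      (by positivity)
    refine ⟨n₀, fun n hn => ?_⟩
    have hwn : (eLpNorm (fun x => un n (φninv n x)) q μ).toReal ≤ K := by
      rw [part1 n]
      have := ENNReal.toReal_mono hC (hbound n)
      rw [hKdef]; linarith
    have hwu : (eLpNorm (fun x => u (φinv x)) q μ).toReal ≤ K := by
      rw [hueq, hKdef]; linarith
    have hεK : (0:ℝ) < ε / (3 * K) := by positivity
    have b1 : (ε/(3*K)) * (eLpNorm (fun x => un n (φninv n x)) q μ).toReal ≤ ε/3 := by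
      calc (ε/(3*K)) * (eLpNorm (fun x => un n (φninv n x)) q μ).toReal
          ≤ (ε/(3*K)) * K := mul_le_mul_of_nonneg_left hwn hεK.le
        _ = ε/3 := by field_simp
    have b3 : (ε/(3*K)) * (eLpNorm (fun x => u (φinv x)) q μ).toReal ≤ ε/3 := by
      calc (ε/(3*K)) * (eLpNorm (fun x => u (φinv x)) q μ).toReal
          ≤ (ε/(3*K)) * K := mul_le_mul_of_nonneg_left hwu hεK.le
        _ = ε/3 := by field_simp
    have t1 := (hb1 _ (hvmem n)).trans b1
    have t3 := (hb1 _ humem).trans b3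
    have t2 := hn₀ n hn
    calc dist (∫ x, g x • un n (φninv n x) ∂μ) (∫ x, g x • u (φinv x) ∂μ)
        ≤ dist (∫ x, g x • un n (φninv n x) ∂μ) (∫ x, g₀ x • un n (φninv n x) ∂μ)
          + dist (∫ x, g₀ x • un n (φninv n x) ∂μ) (∫ x, g₀ x • u (φinv x) ∂μ)
          + dist (∫ x, g₀ x • u (φinv x) ∂μ) (∫ x, g x • u (φinv x) ∂μ) :=
          dist_triangle4 _ _ _ _
      _ < ε := by
          rw [dist_comm (∫ x, g₀ x • u (φinv x) ∂μ)]
          linarith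
  exact ⟨part1, part2, part3⟩
end

section
/- Let N ≥ 1 and let φ : ℝ^N → ℝ^N be a bijective C² map whose inverse is C¹, such that det Dφ(x) = 1 for every x ∈ ℝ^N. Let ψ : ℝ^N → ℝ^N be C¹. Then for every x ∈ ℝ^N: (div(ψ∘φ⁻¹))(φ(x)) = div( y ↦ (Dφ(y))⁻¹ ψ(y) )(x), where for a differentiable vector field F : ℝ^N → ℝ^N we write div F(x) := trace(DF(x)), and (Dφ(y))⁻¹ denotes the inverse of the Jacobian matrix of φ at y. -/
open MeasureTheory Filter Topology

set_option maxHeartbeats 2000000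
set_option synthInstance.maxHeartbeats 400000

lemma hasFDerivAt_matrix_det_one (N : ℕ) :
    HasFDerivAt (fun g : Fin N → Fin N → ℝ => (Matrix.of g).det)
      (∑ i : Fin N, (ContinuousLinearMap.proj (R := ℝ) (φ := fun _ : Fin N => ℝ) i).comp
        (ContinuousLinearMap.proj (R := ℝ) (φ := fun _ : Fin N => Fin N → ℝ) i))
      (1 : Matrix (Fin N) (Fin N) ℝ) := by
  have h : HasFDerivAt
      (fun g : Fin N → Fin N → ℝ => ∑ σ : Equiv.Perm (Fin N),
        ((Equiv.Perm.sign σ : ℤ) : ℝ) * ∏ i, g (σ i) i)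
      (∑ σ : Equiv.Perm (Fin N), ((Equiv.Perm.sign σ : ℤ) : ℝ) •
        (∑ i : Fin N, (∏ j ∈ Finset.univ.erase i, (1 : Matrix (Fin N) (Fin N) ℝ) (σ j) j) •
          ((ContinuousLinearMap.proj (R := ℝ) (φ := fun _ : Fin N => ℝ) i).comp
            (ContinuousLinearMap.proj (R := ℝ) (φ := fun _ : Fin N => Fin N → ℝ) (σ i)))))
      (1 : Matrix (Fin N) (Fin N) ℝ) := by
    apply HasFDerivAt.fun_sum
    intro σ _
    apply HasFDerivAt.const_mul
    exact HasFDerivAt.finset_prod (fun i _ =>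
      (((ContinuousLinearMap.proj (R := ℝ) (φ := fun _ : Fin N => ℝ) i).comp
        (ContinuousLinearMap.proj (R := ℝ) (φ := fun _ : Fin N => Fin N → ℝ) (σ i))).hasFDerivAt))
  have hfun : (fun g : Fin N → Fin N → ℝ => (Matrix.of g).det)
      = fun g : Fin N → Fin N → ℝ => ∑ σ : Equiv.Perm (Fin N),
        ((Equiv.Perm.sign σ : ℤ) : ℝ) * ∏ i, g (σ i) i := by
    funext g
    exact Matrix.det_apply' (Matrix.of g)
  rw [hfun]
  refine h.congr_fderiv ?_
  ext H
  simp only [ContinuousLinearMap.coe_sum', Finset.sum_apply, ContinuousLinearMap.coe_smul',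
    Pi.smul_apply, ContinuousLinearMap.sum_apply, ContinuousLinearMap.smul_apply,
    ContinuousLinearMap.coe_comp', Function.comp_apply, ContinuousLinearMap.proj_apply,
    smul_eq_mul]
  rw [Finset.sum_eq_single (1 : Equiv.Perm (Fin N))]
  · simp [Matrix.one_apply]
  · intro σ _ hσ
    rw [mul_eq_zero]
    right
    refine Finset.sum_eq_zero fun i _ => ?_
    by_cases hfix : ∀ j, j ≠ i → σ j = j
    · exfalso
      apply hσ
      have hii : σ i = i := by
        by_contra hi
        have h1 : σ (σ i) = σ i := hfix (σ i) hi
        exact hi (σ.injective h1)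
      ext j
      by_cases hj : j = i
      · rw [hj, hii]; rfl
      · rw [hfix j hj]; rfl
    · push_neg at hfix
      obtain ⟨j, hj, hji⟩ := hfix
      refine mul_eq_zero_of_left (Finset.prod_eq_zero (Finset.mem_erase.2 ⟨hj, Finset.mem_univ j⟩) ?_) _
      exact Matrix.one_apply_ne hji
  · simp


lemma stmt2_aux {E : Type*} [NormedAddCommGroup E] [NormedSpace ℝ E] [FiniteDimensional ℝ E]
    (φ φinv ψ : E → E)
    (hinvl : Function.LeftInverse φinv φ)
    (hφ : ContDiff ℝ 2 φ) (hφinv : ContDiff ℝ 1 φinv)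
    (hdet : ∀ x, LinearMap.det (fderiv ℝ φ x : E →ₗ[ℝ] E) = 1)
    (hψ : ContDiff ℝ 1 ψ) (x : E) :
    LinearMap.trace ℝ E (fderiv ℝ (ψ ∘ φinv) (φ x) : E →ₗ[ℝ] E)
      = LinearMap.trace ℝ E (fderiv ℝ (fun y => (fderiv ℝ φ y).inverse (ψ y)) x : E →ₗ[ℝ] E) := by
  -- basic differentiability facts
  have hφd : Differentiable ℝ φ := hφ.differentiable (by norm_num)
  have hψd : Differentiable ℝ ψ := hψ.differentiable (by norm_num)
  have hφinvd : Differentiable ℝ φinv := hφinv.differentiable (by norm_num)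
  have hf1 : ContDiff ℝ 1 (fderiv ℝ φ) := hφ.fderiv_right (by norm_num)
  set f : E → (E →L[ℝ] E) := fderiv ℝ φ with hfdef
  set S : E →L[ℝ] (E →L[ℝ] E) := fderiv ℝ f x with hSdef
  have hS : HasFDerivAt f S x := (hf1.differentiable (by norm_num) x).hasFDerivAt
  have hsymm : ∀ v w : E, S v w = S w v :=
    second_derivative_symmetric (fun y => (hφd y).hasFDerivAt) hS
  -- invertibility of `f x`
  have hdetx : LinearMap.det (f x : E →ₗ[ℝ] E) ≠ 0 := by rw [hdet x]; exact one_ne_zero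
  set ℓ : E ≃ₗ[ℝ] E := LinearMap.equivOfDetNeZero (f x : E →ₗ[ℝ] E) hdetx with hℓ
  set Φ : E ≃L[ℝ] E := ℓ.toContinuousLinearEquiv with hΦdef
  have hΦ : (Φ : E →L[ℝ] E) = f x := by ext v; rfl
  set B : E →L[ℝ] E := (Φ.symm : E →L[ℝ] E) with hBdef
  have hBf : B ∘L f x = 1 := by
    refine ContinuousLinearMap.ext fun v => ?_
    rw [ContinuousLinearMap.comp_apply, ← hΦ, ContinuousLinearMap.one_apply]
    exact Φ.symm_apply_apply v
  have hfB : f x ∘L B = 1 := by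
    refine ContinuousLinearMap.ext fun v => ?_
    rw [ContinuousLinearMap.comp_apply, ← hΦ, ContinuousLinearMap.one_apply]
    exact Φ.apply_symm_apply v
  -- derivative of the pointwise inverse
  set u0 : (E →L[ℝ] E)ˣ := ⟨f x, B, hfB, hBf⟩ with hu0
  have hAeq : (fun y => (fderiv ℝ φ y).inverse) = fun y => Ring.inverse (f y) := by
    funext y
    rw [ContinuousLinearMap.ringInverse_eq_inverse]
  have hA : HasFDerivAt (fun y => (fderiv ℝ φ y).inverse)
      ((-(ContinuousLinearMap.mulLeftRight ℝ (E →L[ℝ] E) B B)) ∘L S) x := by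
    rw [hAeq]
    exact (hasFDerivAt_ringInverse (𝕜 := ℝ) u0).comp x hS
  have hAx : (fderiv ℝ φ x).inverse = B := by
    show (f x).inverse = B
    rw [← hΦ, ContinuousLinearMap.inverse_equiv]
  -- the key vanishing trace identity, from `det (Dφ) ≡ 1`
  set n : ℕ := Module.finrank ℝ E with hn
  set b : Module.Basis (Fin n) ℝ E := Module.finBasis ℝ E with hb
  set matL : (E →L[ℝ] E) →ₗ[ℝ] (Fin n → Fin n → ℝ) :=
    { toFun := fun l => fun i j => LinearMap.toMatrix b b (l : E →ₗ[ℝ] E) i j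
      map_add' := by
        intro p q
        funext i j
        simp [Matrix.add_apply]
      map_smul' := by
        intro c p
        funext i j
        simp [Matrix.smul_apply] } with hmatL
  set matC : (E →L[ℝ] E) →L[ℝ] (Fin n → Fin n → ℝ) := LinearMap.toContinuousLinearMap matL
    with hmatC
  have hmatapp : ∀ l : E →L[ℝ] E, ∀ i j,
      matC l i j = LinearMap.toMatrix b b (l : E →ₗ[ℝ] E) i j := by
    intro l i j; rfl
  have hF : HasFDerivAt (fun y => matC (B ∘L f y))
      ((matC ∘L (ContinuousLinearMap.compL ℝ E E E B)) ∘L S) x := by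
    have h1 := ((matC ∘L (ContinuousLinearMap.compL ℝ E E E B)).hasFDerivAt (x := f x)).comp x hS
    exact h1
  have hpt : matC (B ∘L f x) = (1 : Matrix (Fin n) (Fin n) ℝ) := by
    rw [hBf]
    funext i j
    rw [hmatapp]
    show (LinearMap.toMatrix b b) (LinearMap.id) i j = _
    rw [LinearMap.toMatrix_id]
  have hDet1 := hasFDerivAt_matrix_det_one n
  rw [← hpt] at hDet1
  have hcomp := hDet1.comp x hF
  have hconsteq : ((fun g : Fin n → Fin n → ℝ => (Matrix.of g).det) ∘ (fun y => matC (B ∘L f y)))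
      = fun _ : E => LinearMap.det (B : E →ₗ[ℝ] E) := by
    funext y
    show (Matrix.of (matC (B ∘L f y))).det = _
    have h2 : Matrix.of (matC (B ∘L f y))
        = LinearMap.toMatrix b b ((B ∘L f y : E →L[ℝ] E) : E →ₗ[ℝ] E) := rfl
    rw [h2, LinearMap.det_toMatrix, ContinuousLinearMap.toLinearMap_comp, LinearMap.det_comp,
      hdet y, mul_one]
  have hzero : ((∑ i : Fin n, (ContinuousLinearMap.proj (R := ℝ) (φ := fun _ : Fin n => ℝ) i).comp
        (ContinuousLinearMap.proj (R := ℝ) (φ := fun _ : Fin n => Fin n → ℝ) i)) ∘L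
        ((matC ∘L (ContinuousLinearMap.compL ℝ E E E B)) ∘L S)) = 0 := by
    apply hcomp.unique
    rw [hconsteq]
    exact hasFDerivAt_const _ _
  have key : ∀ u : E, LinearMap.trace ℝ E ((B : E →ₗ[ℝ] E) ∘ₗ (S u : E →ₗ[ℝ] E)) = 0 := by
    intro u
    have h0 := congrArg (fun T : E →L[ℝ] ℝ => T u) hzero
    simp only [ContinuousLinearMap.comp_apply, ContinuousLinearMap.zero_apply,
      ContinuousLinearMap.sum_apply, ContinuousLinearMap.proj_apply,
      ContinuousLinearMap.compL_apply] at h0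
    rw [LinearMap.trace_eq_matrix_trace ℝ b, Matrix.trace]
    rw [← ContinuousLinearMap.toLinearMap_comp]
    convert h0 using 1
    rfl
  -- compute the right-hand side derivative
  have hprod := hA.clm_apply (hψd x).hasFDerivAt
  -- compute the left-hand side derivative
  have hBinv : fderiv ℝ φinv (φ x) = B := by
    have hcomp1 : fderiv ℝ (φinv ∘ φ) x = (fderiv ℝ φinv (φ x)) ∘L f x :=
      fderiv_comp x (hφinvd _) (hφd x)
    have hid : fderiv ℝ (φinv ∘ φ) x = ContinuousLinearMap.id ℝ E := by
      have h3 : φinv ∘ φ = id := funext hinvl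
      rw [h3, fderiv_id]
    have h1 : (fderiv ℝ φinv (φ x)) ∘L f x = 1 := by
      rw [← hcomp1, hid]; rfl
    calc fderiv ℝ φinv (φ x) = fderiv ℝ φinv (φ x) ∘L (f x ∘L B) := by rw [hfB]; rfl
    _ = ((fderiv ℝ φinv (φ x)) ∘L f x) ∘L B := by rw [ContinuousLinearMap.comp_assoc]
    _ = B := by rw [h1]; rfl
  have hL : fderiv ℝ (ψ ∘ φinv) (φ x) = fderiv ℝ ψ x ∘L B := by
    rw [fderiv_comp _ (hψd _) (hφinvd _), hinvl x, hBinv]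
  -- the second term of the product rule has vanishing trace
  have hterm2 : (((-(ContinuousLinearMap.mulLeftRight ℝ (E →L[ℝ] E) B B)) ∘L S).flip (ψ x))
      = -(B ∘L (S (B (ψ x)))) := by
    refine ContinuousLinearMap.ext fun v => ?_
    simp only [ContinuousLinearMap.flip_apply, ContinuousLinearMap.comp_apply,
      ContinuousLinearMap.neg_apply, ContinuousLinearMap.mulLeftRight_apply,
      ContinuousLinearMap.mul_apply, neg_inj]
    rw [hsymm (B (ψ x)) v]
  -- put everything together
  rw [hL, hprod.fderiv, hterm2, hAx]
  rw [ContinuousLinearMap.coe_add, map_add]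
  have hzero2 : LinearMap.trace ℝ E ((-(B ∘L S (B (ψ x))) : E →L[ℝ] E) : E →ₗ[ℝ] E) = 0 := by
    rw [ContinuousLinearMap.coe_neg, map_neg, ContinuousLinearMap.toLinearMap_comp, key (B (ψ x)), neg_zero]
  rw [hzero2, add_zero]
  rw [ContinuousLinearMap.toLinearMap_comp, ContinuousLinearMap.toLinearMap_comp]
  rw [← Module.End.mul_eq_comp, ← Module.End.mul_eq_comp, LinearMap.trace_mul_comm]

/-- For a volume-preserving diffeomorphism `φ` (Jacobian determinant `1`), the transformed
divergence `div^φ ψ := (div (ψ ∘ φ⁻¹)) ∘ φ` can be written in divergence form: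
`(div (ψ ∘ φ⁻¹))(φ x) = div (y ↦ (Dφ y)⁻¹ (ψ y)) x`, where `div F x = trace (DF x)`. -/
theorem stmt2
    (N : ℕ) (hN : 1 ≤ N)
    (φ φinv ψ : EuclideanSpace ℝ (Fin N) → EuclideanSpace ℝ (Fin N))
    (hinvl : Function.LeftInverse φinv φ) (hinvr : Function.RightInverse φinv φ)
    (hφ : ContDiff ℝ 2 φ) (hφinv : ContDiff ℝ 1 φinv)
    (hdet : ∀ x, LinearMap.det
      (fderiv ℝ φ x : EuclideanSpace ℝ (Fin N) →ₗ[ℝ] EuclideanSpace ℝ (Fin N)) = 1)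
    (hψ : ContDiff ℝ 1 ψ) :
    ∀ x, LinearMap.trace ℝ (EuclideanSpace ℝ (Fin N))
        (fderiv ℝ (ψ ∘ φinv) (φ x) :
          EuclideanSpace ℝ (Fin N) →ₗ[ℝ] EuclideanSpace ℝ (Fin N))
      = LinearMap.trace ℝ (EuclideanSpace ℝ (Fin N))
        (fderiv ℝ (fun y => (fderiv ℝ φ y).inverse (ψ y)) x :
          EuclideanSpace ℝ (Fin N) →ₗ[ℝ] EuclideanSpace ℝ (Fin N)) := by
  intro x
  exact stmt2_aux φ φinv ψ hinvl hφ hφinv hdet hψ x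
end
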